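/- Let (X, 𝒜, μ) be a measure space with μ a finite measure, and let f : X → ℝ be measurable with μ({x : f(x) = 0}) = 0. Then there exists a function Ψ : [0,∞) → [0,∞) which is concave on [0,∞), continuous, strictly monotonically increasing, satisfies Ψ(0) = 0 and Ψ(ε) → ∞ as ε → ∞, and such that (μ({x : |f(x)| ≤ ε})).toReal ≤ Ψ(ε) for every ε > 0. -/

import Mathlib

open MeasureTheory Filter Set

/-- Proposition 3.4: under the nodal set condition `μ {f = 0} = 0`, there exists a
concave, continuous, strictly increasing modulus `Ψ : [0,∞) → [0,∞)` with `Ψ 0 = 0`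
and `Ψ → ∞` bounding the level-set measures `μ {|f| ≤ ε}`. -/
theorem structural_modulus_exists
    {X : Type*} [MeasurableSpace X] (μ : Measure X) [IsFiniteMeasure μ]
    (f : X → ℝ) (hf : Measurable f) (h0 : μ {x | f x = 0} = 0) :
    ∃ Ψ : ℝ → ℝ,
      ConcaveOn ℝ (Set.Ici 0) Ψ ∧
      ContinuousOn Ψ (Set.Ici 0) ∧
      StrictMonoOn Ψ (Set.Ici 0) ∧
      (∀ x ∈ Set.Ici (0 : ℝ), 0 ≤ Ψ x) ∧
      Ψ 0 = 0 ∧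
      Tendsto Ψ atTop atTop ∧
      ∀ ε > (0 : ℝ), (μ {x | |f x| ≤ ε}).toReal ≤ Ψ ε := by
  classical
  set g : ℝ → X → ℝ := fun ε x => max 0 (min 1 (ε / |f x|)) with hg
  have hg01 : ∀ ε x, 0 ≤ g ε x ∧ g ε x ≤ 1 := by
    intro ε x
    refine ⟨le_max_left _ _, ?_⟩
    simp [hg]
  have hgmeas : ∀ ε, Measurable (g ε) := by
    intro ε
    exact measurable_const.max (measurable_const.min (measurable_const.div hf.abs))
  have hgint : ∀ ε, Integrable (g ε) μ := by
    intro ε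
    refine ⟨(hgmeas ε).aestronglyMeasurable, ?_⟩
    refine HasFiniteIntegral.of_bounded (C := 1) (Filter.Eventually.of_forall fun x => ?_)
    rw [Real.norm_eq_abs, abs_le]
    exact ⟨by linarith [(hg01 ε x).1], (hg01 ε x).2⟩
  set F : ℝ → ℝ := fun ε => ∫ x, g ε x ∂μ with hF
  have hFnonneg : ∀ ε, 0 ≤ F ε := fun ε => integral_nonneg fun x => (hg01 ε x).1
  have hF0 : F 0 = 0 := by
    simp [hF, hg]
  have hFmono : ∀ a b : ℝ, 0 ≤ a → a ≤ b → F a ≤ F b := by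
    intro a b ha hab
    refine integral_mono (hgint a) (hgint b) fun x => ?_
    have : a / |f x| ≤ b / |f x| := by
      rcases eq_or_lt_of_le (abs_nonneg (f x)) with h | h
      · simp [← h]
      · gcongr
    exact max_le_max le_rfl (min_le_min le_rfl this)
  refine ⟨fun ε => ε + F ε, ?_, ?_, ?_, ?_, ?_, ?_, ?_⟩
  · -- concavity
    refine ⟨convex_Ici 0, ?_⟩
    intro x hx y hy a b ha hb hab
    have key : ∀ z, a * g x z + b * g y z ≤ g (a * x + b * y) z := by
      intro z
      rcases eq_or_lt_of_le (abs_nonneg (f z)) with hc | hc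
      · simp [hg, ← hc]
      · have hx0 : (0:ℝ) ≤ x := hx
        have hy0 : (0:ℝ) ≤ y := hy
        have hgx : g x z = min 1 (x / |f z|) := by
          rw [hg]; exact max_eq_right (le_min zero_le_one (div_nonneg hx0 (abs_nonneg _)))
        have hgy : g y z = min 1 (y / |f z|) := by
          rw [hg]; exact max_eq_right (le_min zero_le_one (div_nonneg hy0 (abs_nonneg _)))
        have hxy0 : (0:ℝ) ≤ a * x + b * y := by positivity
        have hgxy : g (a * x + b * y) z = min 1 ((a * x + b * y) / |f z|) := by
          rw [hg]; exact max_eq_right (le_min zero_le_one (div_nonneg hxy0 (abs_nonneg _)))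
        rw [hgx, hgy, hgxy]
        refine le_min ?_ ?_
        · have h1 : a * min 1 (x / |f z|) ≤ a * 1 :=
            mul_le_mul_of_nonneg_left (min_le_left _ _) ha
          have h2 : b * min 1 (y / |f z|) ≤ b * 1 :=
            mul_le_mul_of_nonneg_left (min_le_left _ _) hb
          linarith
        · have h1 : a * min 1 (x / |f z|) ≤ a * (x / |f z|) :=
            mul_le_mul_of_nonneg_left (min_le_right _ _) ha
          have h2 : b * min 1 (y / |f z|) ≤ b * (y / |f z|) :=
            mul_le_mul_of_nonneg_left (min_le_right _ _) hb
          have : a * (x / |f z|) + b * (y / |f z|) = (a * x + b * y) / |f z| := by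
            field_simp
          linarith
    have hint : a * F x + b * F y ≤ F (a * x + b * y) := by
      have h1 : ∫ z, (a * g x z + b * g y z) ∂μ ≤ ∫ z, g (a * x + b * y) z ∂μ :=
        integral_mono (((hgint x).const_mul a).add ((hgint y).const_mul b))
          (hgint _) key
      rwa [integral_add ((hgint x).const_mul a) ((hgint y).const_mul b),
        integral_const_mul, integral_const_mul] at h1
    simp only [smul_eq_mul]
    have : a * (x + F x) + b * (y + F y) = (a * x + b * y) + (a * F x + b * F y) := by ring
    rw [this]
    exact add_le_add le_rfl hint
  · -- continuity
    refine Continuous.continuousOn ?_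
    refine continuous_id.add ?_
    refine continuous_of_dominated (fun ε => (hgmeas ε).aestronglyMeasurable)
      (fun ε => Filter.Eventually.of_forall fun x => ?_) (integrable_const 1)
      (Filter.Eventually.of_forall fun x => ?_)
    · rw [Real.norm_eq_abs, abs_le]
      exact ⟨by linarith [(hg01 ε x).1], (hg01 ε x).2⟩
    · exact continuous_const.max (continuous_const.min ((continuous_id.div_const _)))
  · -- strict mono
    intro a ha b hb hab
    have := hFmono a b ha hab.le
    simp only
    linarith
  · -- nonneg
    intro x hx
    have := hFnonneg x
    have hx0 : (0:ℝ) ≤ x := hx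
    dsimp only
    linarith
  · simp [hF0]
  · -- tendsto atTop
    refine tendsto_atTop_mono' atTop ?_ tendsto_id
    filter_upwards [eventually_ge_atTop (0:ℝ)] with ε hε
    have := hFnonneg ε
    simp only [id]
    linarith
  · -- the bound
    intro ε hε
    have hae : ∀ᵐ x ∂μ, f x ≠ 0 := by
      rw [ae_iff]
      simpa using h0
    set s : Set X := {x | |f x| ≤ ε} with hs
    have hsm : MeasurableSet s := measurableSet_le hf.abs measurable_const
    have h1 : (μ s).toReal = ∫ x in s, (1:ℝ) ∂μ := by
      rw [setIntegral_const, smul_eq_mul, mul_one]; rfl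
    have h2 : ∫ x in s, (1:ℝ) ∂μ ≤ ∫ x in s, g ε x ∂μ := by
      refine setIntegral_mono_ae_restrict (integrable_const 1).integrableOn
        ((hgint ε).integrableOn) ?_
      refine (ae_restrict_iff' hsm).mpr ?_
      filter_upwards [hae] with x hx hxs
      have habs : 0 < |f x| := abs_pos.mpr hx
      have hdiv : 1 ≤ ε / |f x| := (one_le_div habs).mpr hxs
      have : g ε x = 1 := by
        rw [hg]
        simp [min_eq_left hdiv]
      rw [this]
    have h3 : ∫ x in s, g ε x ∂μ ≤ ∫ x, g ε x ∂μ :=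
      setIntegral_le_integral (hgint ε) (Filter.Eventually.of_forall fun x => (hg01 ε x).1)
    calc (μ s).toReal ≤ F ε := by rw [h1]; exact h2.trans h3
      _ ≤ ε + F ε := by linarith
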